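/- Let P(λ) = λ(J₁+R₁) + (J₂+R₂) be an n×n complex posH pencil. If the pencil λR₁ + J₂ is regular, i.e., det(μR₁ + J₂) ≠ 0 for some μ ∈ ℂ, then P(λ) is regular, and if x ∈ ℂⁿ is a nonzero vector with (α(J₁+R₁) + (J₂+R₂))x = 0 for a real number α > 0, then (αJ₁ + J₂)x = 0. -/

import Mathlib

open Matrix
open scoped ComplexOrder

private lemma psd_smul_aux {n : ℕ} (t : ℝ) (ht : 0 ≤ t) {R : Matrix (Fin n) (Fin n) ℂ}
    (hR : R.PosSemidef) : ((t : ℂ) • R).PosSemidef := by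
  refine .of_dotProduct_mulVec_nonneg ?_ ?_
  · have : ((t : ℂ) • R)ᴴ = (t : ℂ) • R := by
      rw [conjTranspose_smul, hR.1.eq]; simp [Complex.conj_ofReal]
    exact this
  · intro x
    rw [smul_mulVec, dotProduct_smul, smul_eq_mul]
    exact mul_nonneg (by exact_mod_cast ht) (hR.dotProduct_mulVec_nonneg x)

private lemma skew_psd_psd_kernel {n : ℕ} (K A B : Matrix (Fin n) (Fin n) ℂ)
    (hK : Kᴴ = -K) (hA : A.PosSemidef) (hB : B.PosSemidef) (x : Fin n → ℂ)
    (h : (K + A + B) *ᵥ x = 0) :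
    A *ᵥ x = 0 ∧ B *ᵥ x = 0 ∧ K *ᵥ x = 0 := by
  set k := star x ⬝ᵥ K *ᵥ x with hk
  set a := star x ⬝ᵥ A *ᵥ x with ha
  set b := star x ⬝ᵥ B *ᵥ x with hb
  have hsum : k + a + b = 0 := by
    have := congrArg (fun v => star x ⬝ᵥ v) h
    simpa [add_mulVec, dotProduct_add, hk, ha, hb] using this
  have hkstar : star k = -k := by
    have : star k = star x ⬝ᵥ Kᴴ *ᵥ x := by
      rw [hk, star_dotProduct, star_star, star_mulVec, dotProduct_mulVec]
    rw [this, hK, neg_mulVec, dotProduct_neg, hk]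
  have hkre : k.re = 0 := by
    have := congrArg Complex.re hkstar
    simp only [Complex.star_def, Complex.conj_re, Complex.neg_re] at this
    linarith
  have ha0 : 0 ≤ a := hA.dotProduct_mulVec_nonneg x
  have hb0 : 0 ≤ b := hB.dotProduct_mulVec_nonneg x
  rw [Complex.le_def] at ha0 hb0
  simp only [Complex.zero_re, Complex.zero_im] at ha0 hb0
  have hre : k.re + a.re + b.re = 0 := by
    have := congrArg Complex.re hsum
    simpa using this
  have hare : a.re = 0 := by linarith [ha0.1, hb0.1]
  have hbre : b.re = 0 := by linarith [ha0.1, hb0.1]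
  have haz : a = 0 := Complex.ext hare ha0.2.symm
  have hbz : b = 0 := Complex.ext hbre hb0.2.symm
  have hAx : A *ᵥ x = 0 := (hA.dotProduct_mulVec_zero_iff x).mp haz
  have hBx : B *ᵥ x = 0 := (hB.dotProduct_mulVec_zero_iff x).mp hbz
  refine ⟨hAx, hBx, ?_⟩
  have := h
  rw [add_mulVec, add_mulVec, hAx, hBx] at this
  simpa using this

private lemma real_kernel_split {n : ℕ} (J₁ J₂ R₁ R₂ : Matrix (Fin n) (Fin n) ℂ)
    (hJ₁ : J₁ᴴ = -J₁) (hJ₂ : J₂ᴴ = -J₂)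
    (hR₁ : R₁.PosSemidef) (hR₂ : R₂.PosSemidef)
    (t : ℝ) (ht : 0 ≤ t) (x : Fin n → ℂ)
    (h : ((t : ℂ) • (J₁ + R₁) + (J₂ + R₂)) *ᵥ x = 0) :
    ((t : ℂ) • R₁) *ᵥ x = 0 ∧ R₂ *ᵥ x = 0 ∧ ((t : ℂ) • J₁ + J₂) *ᵥ x = 0 := by
  have hKs : ((t : ℂ) • J₁ + J₂)ᴴ = -((t : ℂ) • J₁ + J₂) := by
    rw [conjTranspose_add, conjTranspose_smul, hJ₁, hJ₂]
    simp only [Complex.star_def, Complex.conj_ofReal, smul_neg, neg_add_rev]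
    abel
  have heq : (t : ℂ) • (J₁ + R₁) + (J₂ + R₂)
      = (((t : ℂ) • J₁ + J₂) + (t : ℂ) • R₁) + R₂ := by
    rw [smul_add]; abel
  rw [heq] at h
  obtain ⟨h1, h2, h3⟩ := skew_psd_psd_kernel _ _ _ hKs (psd_smul_aux t ht hR₁) hR₂ x h
  exact ⟨h1, h2, h3⟩

/-- Corollary 3.8(iv): if the pencil `λR₁ + J₂` is regular, then the posH pencil
`P(λ) = λ(J₁+R₁) + (J₂+R₂)` is regular, and any eigenvector `x` associated with a
real positive eigenvalue `α` of `P(λ)` satisfies `(αJ₁ + J₂)x = 0`. -/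
theorem posH_regular_of_mixed_pencil_regular {n : ℕ}
    (J₁ J₂ R₁ R₂ : Matrix (Fin n) (Fin n) ℂ)
    (hJ₁ : J₁ᴴ = -J₁) (hJ₂ : J₂ᴴ = -J₂)
    (hR₁ : R₁.PosSemidef) (hR₂ : R₂.PosSemidef)
    (hreg : ∃ μ : ℂ, (μ • R₁ + J₂).det ≠ 0) :
    (∃ μ : ℂ, (μ • (J₁ + R₁) + (J₂ + R₂)).det ≠ 0) ∧
    (∀ (α : ℝ) (x : Fin n → ℂ), 0 < α → x ≠ 0 →
      ((α : ℂ) • (J₁ + R₁) + (J₂ + R₂)) *ᵥ x = 0 →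
      ((α : ℂ) • J₁ + J₂) *ᵥ x = 0) := by
  constructor
  · by_contra hcon
    push_neg at hcon
    obtain ⟨μ, hμ⟩ := hreg
    -- the auxiliary pencil M(t) = t•J₁ + (J₂ + R₁ + R₂) as a polynomial matrix
    set Cmat : Matrix (Fin n) (Fin n) ℂ := J₂ + R₁ + R₂ with hCmat
    set p : Polynomial ℂ :=
      ((Polynomial.X : Polynomial ℂ) • J₁.map Polynomial.C
        + Cmat.map Polynomial.C).det with hp
    have heval : ∀ z : ℂ, p.eval z = (z • J₁ + Cmat).det := by
      intro z
      rw [hp, ← Polynomial.coe_evalRingHom, RingHom.map_det, RingHom.mapMatrix_apply]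
      congr 1
      ext i j
      simp only [Matrix.map_apply, Matrix.add_apply, Matrix.smul_apply, smul_eq_mul,
        Polynomial.coe_evalRingHom, Polynomial.eval_add, Polynomial.eval_mul, Polynomial.eval_X,
        Polynomial.eval_C]
    have hroots : ∀ t : ℝ, 0 < t → p.IsRoot (t : ℂ) := by
      intro t ht
      have hdet : ((t : ℂ) • (J₁ + R₁) + (J₂ + R₂)).det = 0 := hcon (t : ℂ)
      obtain ⟨x, hx0, hxk⟩ := exists_mulVec_eq_zero_iff.mpr hdet
      obtain ⟨h1, h2, h3⟩ := real_kernel_split J₁ J₂ R₁ R₂ hJ₁ hJ₂ hR₁ hR₂ t ht.le x hxk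
      have hR₁x : R₁ *ᵥ x = 0 := by
        rw [smul_mulVec] at h1
        have htne : (t : ℂ) ≠ 0 := by exact_mod_cast ht.ne'
        exact (smul_eq_zero.mp h1).resolve_left htne
      have hMx : ((t : ℂ) • J₁ + Cmat) *ᵥ x = 0 := by
        have : (t : ℂ) • J₁ + Cmat = (((t : ℂ) • J₁ + J₂) + R₁) + R₂ := by
          rw [hCmat]; abel
        rw [this, add_mulVec, add_mulVec, h3, hR₁x, h2]
        simp
      have : ((t : ℂ) • J₁ + Cmat).det = 0 :=
        exists_mulVec_eq_zero_iff.mp ⟨x, hx0, hMx⟩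
      rw [Polynomial.IsRoot, heval]
      exact this
    have hpz : p = 0 := by
      apply p.eq_zero_of_infinite_isRoot
      apply Set.Infinite.mono (s := (fun t : ℝ => (t : ℂ)) '' Set.Ioi 0)
      · rintro z ⟨t, ht, rfl⟩
        exact hroots t ht
      · exact (Set.Ioi_infinite 0).image
          (Function.Injective.injOn Complex.ofReal_injective)
    have hdetC : Cmat.det = 0 := by
      have := heval 0
      rw [hpz] at this
      simpa using this.symm
    obtain ⟨x, hx0, hxk⟩ := exists_mulVec_eq_zero_iff.mpr hdetC
    obtain ⟨h1, h2, h3⟩ := skew_psd_psd_kernel J₂ R₁ R₂ hJ₂ hR₁ hR₂ x hxk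
    have : (μ • R₁ + J₂) *ᵥ x = 0 := by
      rw [add_mulVec, smul_mulVec, h1, h3]
      simp
    exact hμ (exists_mulVec_eq_zero_iff.mp ⟨x, hx0, this⟩)
  · intro α x hα _ hx
    exact (real_kernel_split J₁ J₂ R₁ R₂ hJ₁ hJ₂ hR₁ hR₂ α hα.le x hx).2.2
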